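/- Let φ be a linear endomorphism of a k-vector space V. The image of the localization map φ̇: V → V_x is naturally isomorphic, as a k[x]-module, to the direct limit of the inductive system V → Im(φ) → Im(φ²) → ⋯ where each transition map is given by φ. -/

import Mathlib

open Polynomial

theorem stmt_3 (k : Type*) [Field k] (V : Type*) [AddCommGroup V] [Module k V]
    [Module (Polynomial k) V] [IsScalarTower k (Polynomial k) V]
    (φ : V →ₗ[k] V) (hφ : ∀ v : V, (X : Polynomial k) • v = φ v)
    (G : ℕ → Submodule (Polynomial k) V)
    (hG : ∀ i : ℕ, (G i : Set V) = Set.range (φ ^ i))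
    (f : ∀ i j : ℕ, i ≤ j → G i →ₗ[Polynomial k] G j)
    (hf : ∀ (i j : ℕ) (h : i ≤ j) (x : G i), ((f i j h x : V)) = (φ ^ (j - i)) x) :
    Nonempty (Module.DirectLimit (fun i => G i) f ≃ₗ[Polynomial k]
      LinearMap.range (LocalizedModule.mkLinearMap
        (Submonoid.powers (X : Polynomial k)) V)) := by
  classical
  set S := Submonoid.powers (X : Polynomial k) with hS
  have hXi : ∀ i : ℕ, (X : Polynomial k) ^ i ∈ S := fun i => ⟨i, rfl⟩
  -- X^n acts as φ^n
  have hpow : ∀ (n : ℕ) (v : V), ((X : Polynomial k) ^ n) • v = (φ ^ n) v := by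
    intro n
    induction n with
    | zero => intro v; simp
    | succ n ih =>
      intro v
      rw [pow_succ', mul_smul, hφ, ih, ← Module.End.mul_apply, ← pow_succ']
  haveI : DirectedSystem (fun i => (G i : Type _)) (fun i j h => f i j h) := by
    constructor
    · intro i x
      apply Subtype.ext
      rw [hf]
      simp
    · intro a b c hab hbc x
      apply Subtype.ext
      rw [hf, hf, hf]
      have h1 : (a - b) + (b - c) = a - c := by omega
      rw [← h1, pow_add, Module.End.mul_apply]
  -- the maps g i : G i → LocalizedModule S V, w ↦ w / X^i
  have mk_add : ∀ (m₁ m₂ : V) (s : S),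
      LocalizedModule.mk (m₁ + m₂) s = LocalizedModule.mk m₁ s + LocalizedModule.mk m₂ s := by
    intro m₁ m₂ s
    rw [LocalizedModule.mk_add_mk, LocalizedModule.mk_eq]
    refine ⟨1, ?_⟩
    simp [mul_smul, smul_add]
  let g : ∀ i : ℕ, (G i : Type _) →ₗ[Polynomial k] LocalizedModule S V := fun i =>
    { toFun := fun w => LocalizedModule.mk (w : V) ⟨(X : Polynomial k) ^ i, hXi i⟩
      map_add' := fun w₁ w₂ => by
        simp only [Submodule.coe_add]
        exact mk_add _ _ _
      map_smul' := fun r w => by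
        simp only [SetLike.val_smul, RingHom.id_apply]
        exact (LocalizedModule.smul'_mk r _ _).symm }
  have Hg : ∀ (i j : ℕ) (hij : i ≤ j) (x : G i), g j (f i j hij x) = g i x := by
    intro i j hij x
    show LocalizedModule.mk ((f i j hij x : V)) ⟨(X : Polynomial k) ^ j, hXi j⟩
      = LocalizedModule.mk (x : V) ⟨(X : Polynomial k) ^ i, hXi i⟩
    rw [hf, ← hpow]
    have hj : (⟨(X : Polynomial k) ^ j, hXi j⟩ : S)
        = ⟨(X : Polynomial k) ^ (j - i), hXi _⟩ * ⟨(X : Polynomial k) ^ i, hXi i⟩ := by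
      apply Subtype.ext
      show (X : Polynomial k) ^ j = (X : Polynomial k) ^ (j - i) * (X : Polynomial k) ^ i
      rw [← pow_add]
      congr 1
      omega
    rw [hj]
    have := LocalizedModule.mk_cancel_common_left (⟨(X : Polynomial k) ^ (j - i), hXi _⟩ : S)
      (⟨(X : Polynomial k) ^ i, hXi i⟩) (x : V)
    simpa [Submonoid.mk_smul] using this
  let L := Module.DirectLimit.lift (Polynomial k) ℕ (fun i => G i) f g Hg
  -- membership of the range
  have hone : (⟨(X : Polynomial k) ^ 0, hXi 0⟩ : S) = 1 := by
    apply Subtype.ext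
    simp
  have hmem : ∀ z, L z ∈ LinearMap.range (LocalizedModule.mkLinearMap S V) := by
    intro z
    induction z using Module.DirectLimit.induction_on with
    | ih i x =>
      rw [Module.DirectLimit.lift_of]
      obtain ⟨v, hv⟩ : (x : V) ∈ Set.range (φ ^ i) := by
        rw [← hG i]; exact x.2
      refine ⟨v, ?_⟩
      show LocalizedModule.mk v 1
        = LocalizedModule.mk (x : V) ⟨(X : Polynomial k) ^ i, hXi i⟩
      have : (x : V) = (⟨(X : Polynomial k) ^ i, hXi i⟩ : S) • v := by
        rw [Submonoid.mk_smul, hpow, hv]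
      rw [this]
      exact (LocalizedModule.mk_cancel _ _).symm
  have hinj : Function.Injective L := by
    rw [injective_iff_map_eq_zero]
    intro z hz
    induction z using Module.DirectLimit.induction_on with
    | ih i x =>
      rw [Module.DirectLimit.lift_of] at hz
      -- mk x X^i = 0 means some power of X kills x
      have hz' : LocalizedModule.mk (x : V) ⟨(X : Polynomial k) ^ i, hXi i⟩
          = LocalizedModule.mk (0 : V) 1 := by
        rw [LocalizedModule.zero_mk]; exact hz
      rw [LocalizedModule.mk_eq] at hz'
      obtain ⟨u, hu⟩ := hz'
      obtain ⟨n, hn⟩ := u.2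
      have hkill : (φ ^ n) (x : V) = 0 := by
        have := hu
        simp only [one_smul, smul_zero] at this
        have hcast : (u : Polynomial k) • (x : V) = 0 := this
        rw [← hn] at hcast
        rwa [hpow] at hcast
      have hfz : f i (i + n) (Nat.le_add_right i n) x = 0 := by
        apply Subtype.ext
        rw [hf]
        simpa using hkill
      calc Module.DirectLimit.of (Polynomial k) ℕ (fun i => G i) f i x
          = Module.DirectLimit.of (Polynomial k) ℕ (fun i => G i) f (i + n)
            (f i (i + n) (Nat.le_add_right i n) x) := (Module.DirectLimit.of_f).symm
        _ = 0 := by rw [hfz, map_zero]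
  have hsurj : ∀ y : LinearMap.range (LocalizedModule.mkLinearMap S V),
      ∃ z, L.codRestrict _ hmem z = y := by
    rintro ⟨y, v, hv⟩
    have hv0 : v ∈ G 0 := by
      rw [← SetLike.mem_coe, hG]
      exact ⟨v, by simp⟩
    refine ⟨Module.DirectLimit.of (Polynomial k) ℕ (fun i => G i) f 0 ⟨v, hv0⟩, ?_⟩
    apply Subtype.ext
    show L _ = y
    rw [Module.DirectLimit.lift_of]
    show LocalizedModule.mk v ⟨(X : Polynomial k) ^ 0, hXi 0⟩ = y
    rw [hone, ← hv]
    rfl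
  exact ⟨LinearEquiv.ofBijective (L.codRestrict _ hmem)
    ⟨fun a b hab => hinj (congrArg Subtype.val hab), fun y => hsurj y⟩⟩
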